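/- arXiv:2407.16996 — 7 statements merged into one kernel-verified Lean document; each statement's English description precedes it below -/
import Mathlib

section
/- The canonical continuous map φ : X/∼_f → X ∪_f Y is injective. -/
/-- The equivalence relation `∼_f` on `X`: `x ∼_f x'` iff `x = x'`, or both lie in `A`
and have the same image under `f`. -/
def glueRel {X Y : Type} (A : Set X) (f : A → Y) : X → X → Prop :=
  fun x x' => x = x' ∨ ∃ (hx : x ∈ A) (hx' : x' ∈ A), f ⟨x, hx⟩ = f ⟨x', hx'⟩

/-- The relation on `X ⊕ Y` generating the adjunction-space identifications:
each `a ∈ A` is identified with `f a ∈ Y`.  The adjunction space `X ∪_f Y` is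
`Quot (adjRel A f)`, the quotient by the smallest equivalence relation containing it. -/
def adjRel {X Y : Type} (A : Set X) (f : A → Y) : X ⊕ Y → X ⊕ Y → Prop :=
  fun p q => ∃ a : A, p = Sum.inl (a : X) ∧ q = Sum.inr (f a)

/-- Auxiliary equivalence relation on `X ⊕ Y` containing `adjRel`, whose
restriction to `inl` is `glueRel`. -/
def bigRel {X Y : Type} (A : Set X) (f : A → Y) : X ⊕ Y → X ⊕ Y → Prop
  | Sum.inl x, Sum.inl x' => glueRel A f x x'
  | Sum.inl x, Sum.inr y => ∃ hx : x ∈ A, f ⟨x, hx⟩ = y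
  | Sum.inr y, Sum.inl x => ∃ hx : x ∈ A, f ⟨x, hx⟩ = y
  | Sum.inr y, Sum.inr y' => y = y'

lemma eqvGen_bigRel {X Y : Type} (A : Set X) (f : A → Y) {p q : X ⊕ Y}
    (h : Relation.EqvGen (adjRel A f) p q) : bigRel A f p q := by
  induction h with
  | rel p q hpq =>
    obtain ⟨a, rfl, rfl⟩ := hpq
    exact ⟨a.2, rfl⟩
  | refl p =>
    cases p with
    | inl x => exact Or.inl rfl
    | inr y => rfl
  | symm p q _ ih =>
    cases p with
    | inl x =>
      cases q with
      | inl x' =>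
        rcases ih with rfl | ⟨h1, h2, h3⟩
        · exact Or.inl rfl
        · exact Or.inr ⟨h2, h1, h3.symm⟩
      | inr y => exact ih
    | inr y =>
      cases q with
      | inl x => exact ih
      | inr y' => exact ih.symm
  | trans p q r _ _ ih1 ih2 =>
    cases p with
    | inl x =>
      cases q with
      | inl x' =>
        cases r with
        | inl x'' =>
          rcases ih1 with rfl | ⟨h1, h2, h3⟩
          · exact ih2
          · rcases ih2 with rfl | ⟨h1', h2', h3'⟩
            · exact Or.inr ⟨h1, h2, h3⟩
            · exact Or.inr ⟨h1, h2', by rw [h3]; exact (by simpa using h3')⟩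
        | inr y =>
          obtain ⟨hx', hfx'⟩ := ih2
          rcases ih1 with rfl | ⟨h1, h2, h3⟩
          · exact ⟨hx', hfx'⟩
          · exact ⟨h1, by rw [h3]; simpa using hfx'⟩
      | inr y =>
        obtain ⟨hx, hfx⟩ := ih1
        cases r with
        | inl x'' =>
          obtain ⟨hx'', hfx''⟩ := ih2
          exact Or.inr ⟨hx, hx'', hfx.trans hfx''.symm⟩
        | inr y' => exact ⟨hx, hfx.trans ih2⟩
    | inr y =>
      cases q with
      | inl x' =>
        obtain ⟨hx', hfx'⟩ := ih1
        cases r with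
        | inl x'' =>
          rcases ih2 with rfl | ⟨h1, h2, h3⟩
          · exact ⟨hx', hfx'⟩
          · exact ⟨h2, by rw [← hfx']; exact (by simpa using h3.symm)⟩
        | inr y' =>
          obtain ⟨hx'2, hfx'2⟩ := ih2
          exact hfx'.symm.trans (by simpa using hfx'2)
      | inr y' =>
        cases ih1
        exact ih2

/-- the canonical continuous map `φ : X/∼_f → X ∪_f Y`
(the unique continuous map with `φ ∘ p = q ∘ i_X`) is injective. -/
theorem stmt0 {X Y : Type} [TopologicalSpace X] [TopologicalSpace Y]
    (A : Set X) (f : A → Y) (hf : Continuous f)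
    (φ : Quot (glueRel A f) → Quot (adjRel A f))
    (hφcont : Continuous φ)
    (hφ : ∀ x : X, φ (Quot.mk (glueRel A f) x) = Quot.mk (adjRel A f) (Sum.inl x)) :
    Function.Injective φ := by
  intro u v h
  induction u using Quot.ind with | _ x =>
  induction v using Quot.ind with | _ x' =>
  rw [hφ, hφ] at h
  exact Quot.sound (eqvGen_bigRel A f (Quot.eqvGen_exact h))
end

section
/- For every subset S of X/∼_f, regarding X and Y as subsets of X ⊔ Y via i_X and i_Y, the following two identities hold: q⁻¹(φ(S)) ∩ X = i_X⁻¹(q⁻¹(φ(S))) = p⁻¹(φ⁻¹(φ(S))), and q⁻¹(φ(S)) ∩ Y = f(p⁻¹(S) ∩ A). -/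
/-- An explicit description of the equivalence closure of `adjRel`. -/
def adjE {X Y : Type} (A : Set X) (f : A → Y) : X ⊕ Y → X ⊕ Y → Prop
  | Sum.inl x, Sum.inl x' => glueRel A f x x'
  | Sum.inl x, Sum.inr y => ∃ hx : x ∈ A, f ⟨x, hx⟩ = y
  | Sum.inr y, Sum.inl x => ∃ hx : x ∈ A, f ⟨x, hx⟩ = y
  | Sum.inr y, Sum.inr y' => y = y'

lemma adjE_of_eqvGen {X Y : Type} (A : Set X) (f : A → Y) {p q : X ⊕ Y}
    (h : Relation.EqvGen (adjRel A f) p q) : adjE A f p q := by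
  induction h with
  | rel p q h => obtain ⟨a, rfl, rfl⟩ := h; exact ⟨a.2, rfl⟩
  | refl p => cases p with
    | inl x => exact Or.inl rfl
    | inr y => exact rfl
  | symm p q h ih =>
    cases p <;> cases q <;> simp only [adjE] at ih ⊢
    · rcases ih with h | ⟨hx, hx', he⟩
      · exact Or.inl h.symm
      · exact Or.inr ⟨hx', hx, he.symm⟩
    · exact ih
    · exact ih
    · exact ih.symm
  | trans p q r h1 h2 ih1 ih2 =>
    cases p <;> cases q <;> cases r <;> simp only [adjE] at ih1 ih2 ⊢
    case inl.inl.inl x x' x'' =>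
      rcases ih1 with rfl | ⟨hx, hx', he⟩
      · exact ih2
      · rcases ih2 with rfl | ⟨hx'2, hx'', he'⟩
        · exact Or.inr ⟨hx, hx', he⟩
        · exact Or.inr ⟨hx, hx'', by rw [he]; exact he'⟩
    case inl.inl.inr x x' y =>
      rcases ih1 with rfl | ⟨hx, hx', he⟩
      · exact ih2
      · obtain ⟨hx'2, he'⟩ := ih2
        exact ⟨hx, by rw [he]; exact he'⟩
    case inl.inr.inl x y x' =>
      obtain ⟨hx, he⟩ := ih1
      obtain ⟨hx', he'⟩ := ih2
      exact Or.inr ⟨hx, hx', he.trans he'.symm⟩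
    case inl.inr.inr x y y' =>
      obtain ⟨hx, he⟩ := ih1
      exact ⟨hx, he.trans ih2⟩
    case inr.inl.inl y x x' =>
      obtain ⟨hx, he⟩ := ih1
      rcases ih2 with rfl | ⟨hx2, hx', he'⟩
      · exact ⟨hx, he⟩
      · exact ⟨hx', by rw [← he']; rw [← he]⟩
    case inr.inl.inr y x y' =>
      obtain ⟨hx, he⟩ := ih1
      obtain ⟨hx2, he'⟩ := ih2
      rw [← he, ← he']
    case inr.inr.inl y y' x =>
      subst ih1; exact ih2
    case inr.inr.inr y y' y'' =>
      exact ih1.trans ih2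

/-- for every subset `S` of `X/∼_f`, regarding `X` and `Y` as subsets of
`X ⊔ Y` via `i_X = Sum.inl` and `i_Y = Sum.inr`:
`q⁻¹(φ(S)) ∩ X = i_X⁻¹(q⁻¹(φ(S))) = p⁻¹(φ⁻¹(φ(S)))` and
`q⁻¹(φ(S)) ∩ Y = f(p⁻¹(S) ∩ A)`. -/
theorem stmt2 {X Y : Type} [TopologicalSpace X] [TopologicalSpace Y]
    (A : Set X) (f : A → Y) (hf : Continuous f)
    (φ : Quot (glueRel A f) → Quot (adjRel A f))
    (hφcont : Continuous φ)
    (hφ : ∀ x : X, φ (Quot.mk (glueRel A f) x) = Quot.mk (adjRel A f) (Sum.inl x))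
    (S : Set (Quot (glueRel A f))) :
    (Quot.mk (adjRel A f) ⁻¹' (φ '' S) ∩ Set.range (Sum.inl : X → X ⊕ Y)
        = Sum.inl '' (Sum.inl ⁻¹' (Quot.mk (adjRel A f) ⁻¹' (φ '' S)))) ∧
    (Sum.inl ⁻¹' (Quot.mk (adjRel A f) ⁻¹' (φ '' S))
        = Quot.mk (glueRel A f) ⁻¹' (φ ⁻¹' (φ '' S))) ∧
    (Sum.inr ⁻¹' (Quot.mk (adjRel A f) ⁻¹' (φ '' S))
        = f '' (Subtype.val ⁻¹' (Quot.mk (glueRel A f) ⁻¹' S))) := by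
  refine ⟨Set.image_preimage_eq_inter_range.symm, ?_, ?_⟩
  · ext x
    simp only [Set.mem_preimage, hφ x]
  · ext y
    simp only [Set.mem_preimage, Set.mem_image]
    constructor
    · rintro ⟨s, hs, he⟩
      obtain ⟨x, rfl⟩ := Quot.exists_rep s
      rw [hφ x] at he
      have := adjE_of_eqvGen A f (Quot.eqvGen_exact he)
      obtain ⟨hx, hfx⟩ := this
      exact ⟨⟨x, hx⟩, hs, hfx⟩
    · rintro ⟨⟨x, hx⟩, hs, rfl⟩
      refine ⟨Quot.mk _ x, hs, ?_⟩
      rw [hφ x]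
      exact Quot.sound ⟨⟨x, hx⟩, rfl, rfl⟩
end

section
/- If f : A → Y is surjective, A is closed in X, and f is a closed map, then the canonical continuous map φ : X/∼_f → X ∪_f Y is a homeomorphism. -/
/-- if `f : A → Y` is surjective, `A` is closed in `X` and `f` is a closed
map, then the canonical continuous map `φ : X/∼_f → X ∪_f Y` is a homeomorphism. -/
theorem stmt3 {X Y : Type} [TopologicalSpace X] [TopologicalSpace Y]
    (A : Set X) (f : A → Y) (hf : Continuous f)
    (hfsurj : Function.Surjective f)
    (hAclosed : IsClosed A)
    (hfclosed : IsClosedMap f)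
    (φ : Quot (glueRel A f) → Quot (adjRel A f))
    (hφcont : Continuous φ)
    (hφ : ∀ x : X, φ (Quot.mk (glueRel A f) x) = Quot.mk (adjRel A f) (Sum.inl x)) :
    IsHomeomorph φ := by
  classical
  -- a section g of f
  set g : Y → A := fun y => (hfsurj y).choose with hg
  have hgspec : ∀ y, f (g y) = y := fun y => (hfsurj y).choose_spec
  -- the inverse map ψ
  have hresp : ∀ p q : X ⊕ Y, adjRel A f p q →
      Sum.elim (Quot.mk (glueRel A f)) (fun y => Quot.mk (glueRel A f) (g y : X)) p =
      Sum.elim (Quot.mk (glueRel A f)) (fun y => Quot.mk (glueRel A f) (g y : X)) q := by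
    rintro p q ⟨a, rfl, rfl⟩
    simp only [Sum.elim_inl, Sum.elim_inr]
    exact Quot.sound (Or.inr ⟨a.2, (g (f a)).2, by
      show f a = f (g (f a)); rw [hgspec]⟩)
  set ψ : Quot (adjRel A f) → Quot (glueRel A f) :=
    Quot.lift (Sum.elim (Quot.mk (glueRel A f)) (fun y => Quot.mk (glueRel A f) (g y : X)))
      hresp with hψ
  have hψφ : ∀ c, ψ (φ c) = c := by
    refine Quot.ind (fun x => ?_)
    rw [hφ x]
    rfl
  have hinr : ∀ y : Y, Quot.mk (adjRel A f) (Sum.inr y) =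
      Quot.mk (adjRel A f) (Sum.inl (g y : X)) := by
    intro y
    exact (Quot.sound ⟨g y, rfl, by rw [hgspec]⟩).symm
  have hφψ : ∀ d, φ (ψ d) = d := by
    refine Quot.ind (fun z => ?_)
    cases z with
    | inl x => rw [show ψ (Quot.mk _ (Sum.inl x)) = Quot.mk (glueRel A f) x from rfl, hφ]
    | inr y =>
      rw [show ψ (Quot.mk _ (Sum.inr y)) = Quot.mk (glueRel A f) (g y : X) from rfl, hφ,
        hinr]
  have hbij : Function.Bijective φ :=
    ⟨Function.LeftInverse.injective hψφ, Function.RightInverse.surjective hφψ⟩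
  rw [isHomeomorph_iff_continuous_isClosedMap_bijective]
  refine ⟨hφcont, ?_, hbij⟩
  -- closed map
  intro C hC
  have hmem : ∀ z : X ⊕ Y, Quot.mk (adjRel A f) z ∈ φ '' C ↔ ψ (Quot.mk (adjRel A f) z) ∈ C := by
    intro z
    constructor
    · rintro ⟨c, hc, hcz⟩; rw [← hcz, hψφ]; exact hc
    · intro h
      exact ⟨ψ (Quot.mk (adjRel A f) z), h, hφψ (Quot.mk (adjRel A f) z)⟩
  rw [← isQuotientMap_quot_mk.isClosed_preimage, isClosed_sum_iff]
  constructor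
  · have : Sum.inl ⁻¹' (Quot.mk (adjRel A f) ⁻¹' (φ '' C))
        = Quot.mk (glueRel A f) ⁻¹' C := by
      ext x
      simp only [Set.mem_preimage]
      rw [hmem]
      rfl
    rw [this]
    exact hC.preimage continuous_quot_mk
  · -- image under inr
    have hD : IsClosed {a : A | Quot.mk (glueRel A f) (a : X) ∈ C} :=
      hC.preimage (continuous_quot_mk.comp continuous_subtype_val)
    have hS : Sum.inr ⁻¹' (Quot.mk (adjRel A f) ⁻¹' (φ '' C))
        = f '' {a : A | Quot.mk (glueRel A f) (a : X) ∈ C} := by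
      ext y
      rw [Set.mem_preimage, Set.mem_preimage, hmem (Sum.inr y)]
      show Quot.mk (glueRel A f) (g y : X) ∈ C ↔ _
      constructor
      · intro h; exact ⟨g y, h, hgspec y⟩
      · rintro ⟨a, ha, rfl⟩
        simp only [Set.mem_setOf_eq] at ha
        have : Quot.mk (glueRel A f) (g (f a) : X) = Quot.mk (glueRel A f) (a : X) :=
          Quot.sound (Or.inr ⟨(g (f a)).2, a.2, by show f (g (f a)) = f a; rw [hgspec]⟩)
        rwa [this]
    rw [hS]
    exact hfclosed _ hD
end

section
/- If f : A → Y is surjective and Y is a discrete topological space, then the canonical continuous map φ : X/∼_f → X ∪_f Y is a homeomorphism. -/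
/-- if `f : A → Y` is surjective and `Y` is discrete, then the canonical
continuous map `φ : X/∼_f → X ∪_f Y` is a homeomorphism. -/
theorem stmt4 {X Y : Type} [TopologicalSpace X] [TopologicalSpace Y]
    [DiscreteTopology Y]
    (A : Set X) (f : A → Y) (hf : Continuous f)
    (hfsurj : Function.Surjective f)
    (φ : Quot (glueRel A f) → Quot (adjRel A f))
    (hφcont : Continuous φ)
    (hφ : ∀ x : X, φ (Quot.mk (glueRel A f) x) = Quot.mk (adjRel A f) (Sum.inl x)) :
    IsHomeomorph φ := by
  classical
  -- section of f
  let s : Y → A := fun y => (hfsurj y).choose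
  have hs : ∀ y, f (s y) = y := fun y => (hfsurj y).choose_spec
  -- inverse on the disjoint union
  let g : X ⊕ Y → Quot (glueRel A f) :=
    Sum.elim (Quot.mk _) (fun y => Quot.mk _ (s y : X))
  have hg : ∀ p q, adjRel A f p q → g p = g q := by
    rintro p q ⟨a, rfl, rfl⟩
    apply Quot.sound
    exact Or.inr ⟨a.2, (s (f a)).2, by simp [hs (f a)]⟩
  let ψ : Quot (adjRel A f) → Quot (glueRel A f) := Quot.lift g hg
  have hψcont : Continuous ψ := by
    exact continuous_quot_lift hg (Continuous.sumElim continuous_quot_mk continuous_of_discreteTopology)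
  have hli : Function.LeftInverse ψ φ := by
    intro x
    induction x using Quot.ind with
    | _ x => rw [hφ x]; rfl
  have hri : Function.RightInverse ψ φ := by
    intro x
    induction x using Quot.ind with
    | _ p =>
      cases p with
      | inl x => show φ (Quot.mk _ x) = _; rw [hφ x]
      | inr y =>
        show φ (Quot.mk _ (s y : X)) = _
        rw [hφ]
        exact Quot.sound ⟨s y, rfl, by rw [hs]⟩
  exact (Homeomorph.mk ⟨φ, ψ, hli, hri⟩ hφcont hψcont).isHomeomorph
end

section
/- The map θ_1 : H_1(K) → H_1(K̃) induced by the inclusion K ⊆ K̃ is injective. -/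
/-- An abstract simplicial complex on a vertex type `α`: a collection of nonempty
finite subsets of `α` closed under passing to nonempty subsets. -/
structure AbsSC (α : Type) where
  faces : Set (Finset α)
  not_empty_mem : ∅ ∉ faces
  down_closed : ∀ {s t : Finset α}, s ∈ faces → t ⊆ s → t.Nonempty → t ∈ faces

namespace AbsSC

variable {α : Type}

/-- The vertex set of an abstract simplicial complex. -/
def vertexSet (K : AbsSC α) : Set α := {v | {v} ∈ K.faces}

/-- The type of `q`-simplices (faces with `q+1` vertices). -/
def simplices (K : AbsSC α) (q : ℕ) : Type :=
  {s : Finset α // s ∈ K.faces ∧ s.card = q + 1}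

/-- The space of `q`-chains over `ℤ/2`: formal sums of `q`-simplices. -/
abbrev Chain (K : AbsSC α) (q : ℕ) : Type := K.simplices q →₀ ZMod 2

/-- The sum of the `q`-dimensional faces of a `(q+1)`-simplex. -/
noncomputable def faceChain (K : AbsSC α) (q : ℕ) (s : K.simplices (q + 1)) : K.Chain q :=
  ∑ t ∈ (s.1.powersetCard (q + 1)).attach,
    Finsupp.single
      ⟨t.1, by
        obtain ⟨hsub, hcard⟩ := Finset.mem_powersetCard.mp t.2
        refine ⟨K.down_closed s.2.1 hsub ?_, hcard⟩
        rw [← Finset.card_pos, hcard]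
        omega⟩
      (1 : ZMod 2)

/-- The boundary map `∂_{q+1} : C_{q+1}(K) → C_q(K)`, sending each `(q+1)`-simplex to
the sum of its `q`-dimensional faces. -/
noncomputable def boundary (K : AbsSC α) (q : ℕ) :
    K.Chain (q + 1) →ₗ[ZMod 2] K.Chain q :=
  Finsupp.lsum (ZMod 2) fun s => LinearMap.toSpanSingleton (ZMod 2) (K.Chain q) (K.faceChain q s)

/-- The cycle subspace: `ker ∂_q` (all of `C_0` in degree `0`). -/
noncomputable def cycles (K : AbsSC α) : (q : ℕ) → Submodule (ZMod 2) (K.Chain q)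
  | 0 => ⊤
  | q + 1 => LinearMap.ker (K.boundary q)

/-- The boundaries, viewed as a submodule of the cycles. -/
noncomputable def boundariesIn (K : AbsSC α) (q : ℕ) :
    Submodule (ZMod 2) (K.cycles q) :=
  Submodule.comap (K.cycles q).subtype (LinearMap.range (K.boundary q))

/-- The `q`-th simplicial homology over `ℤ/2`: `H_q(K) = ker ∂_q / im ∂_{q+1}`. -/
def Homology (K : AbsSC α) (q : ℕ) : Type :=
  (K.cycles q) ⧸ (K.boundariesIn q)

noncomputable instance (K : AbsSC α) (q : ℕ) : AddCommGroup (K.Homology q) :=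
  inferInstanceAs (AddCommGroup ((K.cycles q) ⧸ (K.boundariesIn q)))

noncomputable instance (K : AbsSC α) (q : ℕ) : Module (ZMod 2) (K.Homology q) :=
  inferInstanceAs (Module (ZMod 2) ((K.cycles q) ⧸ (K.boundariesIn q)))

/-- The homology class of a cycle. -/
noncomputable def hClass (K : AbsSC α) (q : ℕ) (c : K.Chain q) (hc : c ∈ K.cycles q) :
    K.Homology q :=
  Submodule.Quotient.mk ⟨c, hc⟩

/-- The chain map induced by an inclusion of simplicial complexes. -/
noncomputable def chainMap (K L : AbsSC α) (h : K.faces ⊆ L.faces) (q : ℕ) :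
    K.Chain q →ₗ[ZMod 2] L.Chain q :=
  Finsupp.lmapDomain (ZMod 2) (ZMod 2) fun s : K.simplices q =>
    (⟨s.1, h s.2.1, s.2.2⟩ : L.simplices q)

/-- `θ` is the map on `q`-th homology induced by the inclusion `K ⊆ L`: it sends the
class of every cycle `c` of `K` to the class of the image chain of `c` in `L`. -/
def InducedHom (K L : AbsSC α) (q : ℕ)
    (θ : K.Homology q →ₗ[ZMod 2] L.Homology q) : Prop :=
  ∃ h : K.faces ⊆ L.faces,
    ∀ (c : K.Chain q) (hc : c ∈ K.cycles q),
      ∃ hc' : chainMap K L h q c ∈ L.cycles q,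
        θ (K.hClass q c hc) = L.hClass q (chainMap K L h q c) hc'

end AbsSC

/-- The faces of the gluing stars `S = S_1 ⊔ ⋯ ⊔ S_k`: for each `j`, the vertex `{z j}`,
the vertices `{v}` for `v ∈ P j`, and the edges `{z j, v}` for `v ∈ P j`. -/
def starFaces {α : Type} [DecidableEq α] {k : ℕ} (P : Fin k → Set α) (z : Fin k → α) :
    Set (Finset α) :=
  {s | ∃ j : Fin k, s = {z j} ∨ ∃ v ∈ P j, s = {v} ∨ s = {z j, v}}

section Tower

variable {W : ℕ → Type} [∀ i, AddCommGroup (W i)] [∀ i, Module (ZMod 2) (W i)]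

/-- The composite `φ_{i,j} = φ_{j-1} ∘ ⋯ ∘ φ_i` of the connecting maps of a tower
(the identity when `i = j`). -/
noncomputable def comps (φ : ∀ i, W i →ₗ[ZMod 2] W (i + 1)) {i j : ℕ} (h : i ≤ j) :
    W i →ₗ[ZMod 2] W j :=
  Nat.leRecOn (C := fun m => W i →ₗ[ZMod 2] W m) h (fun {m} g => (φ m).comp g) LinearMap.id

/-- `s ∈ W b` has persistence interval `(b, d)` with finite death `d ∈ {b+1, …, n}`:
`s ∉ im φ_{b-1}`, `φ_{b,d'}(s) ∉ im φ_{b-1,d'}` for all `b ≤ d' < d`, and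
`φ_{b,d}(s) ∈ im φ_{b-1,d}`. -/
def HasPersIntervalFin (φ : ∀ i, W i →ₗ[ZMod 2] W (i + 1)) (n b d : ℕ) (s : W b) : Prop :=
  ∃ (_ : 1 ≤ b) (hbd : b < d) (_ : d ≤ n),
    s ∉ LinearMap.range (comps φ (Nat.sub_le b 1)) ∧
    (∀ (d' : ℕ) (hd' : b ≤ d'), d' < d →
      comps φ hd' s ∉ LinearMap.range (comps φ (Nat.le_trans (Nat.sub_le b 1) hd'))) ∧
    comps φ (Nat.le_of_lt hbd) s ∈
      LinearMap.range (comps φ (Nat.le_trans (Nat.sub_le b 1) (Nat.le_of_lt hbd)))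

/-- `s ∈ W b` has persistence interval `(b, ∞)`: `s ∉ im φ_{b-1}` and
`φ_{b,d'}(s) ∉ im φ_{b-1,d'}` for all `b ≤ d' ≤ n`. -/
def HasPersIntervalInf (φ : ∀ i, W i →ₗ[ZMod 2] W (i + 1)) (n b : ℕ) (s : W b) : Prop :=
  ∃ _ : 1 ≤ b,
    s ∉ LinearMap.range (comps φ (Nat.sub_le b 1)) ∧
    ∀ (d' : ℕ) (hd' : b ≤ d'), d' ≤ n →
      comps φ hd' s ∉ LinearMap.range (comps φ (Nat.le_trans (Nat.sub_le b 1) hd'))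

end Tower


section Aux

variable {α : Type} [DecidableEq α]

lemma chainMap_injective (K L : AbsSC α) (h : K.faces ⊆ L.faces) (q : ℕ) :
    Function.Injective (AbsSC.chainMap K L h q) := by
  apply Finsupp.mapDomain_injective
  intro a b hab
  exact Subtype.ext (congrArg (fun x : L.simplices q => x.1) hab)

lemma chainMap_boundary (K L : AbsSC α) (h : K.faces ⊆ L.faces) (q : ℕ)
    (c : K.Chain (q + 1)) :
    AbsSC.chainMap K L h q (K.boundary q c) =
      L.boundary q (AbsSC.chainMap K L h (q + 1) c) := by
  have : (AbsSC.chainMap K L h q).comp (K.boundary q) =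
      (L.boundary q).comp (AbsSC.chainMap K L h (q + 1)) := by
    apply Finsupp.lhom_ext
    intro s b
    simp only [LinearMap.comp_apply, AbsSC.boundary, Finsupp.lsum_single,
      LinearMap.toSpanSingleton_apply]
    rw [show (AbsSC.chainMap K L h (q+1)) (Finsupp.single s b)
        = Finsupp.single (⟨s.1, h s.2.1, s.2.2⟩ : L.simplices (q+1)) b from
      Finsupp.mapDomain_single]
    erw [Finsupp.lsum_single, LinearMap.toSpanSingleton_apply, map_smul]
    congr 1
    unfold AbsSC.faceChain
    rw [map_sum]
    apply Finset.sum_congr rfl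
    intro t _
    exact Finsupp.mapDomain_single
  exact LinearMap.congr_fun this c

lemma starFaces_card_le {k : ℕ} (P : Fin k → Set α) (z : Fin k → α)
    {s : Finset α} (hs : s ∈ starFaces P z) : s.card ≤ 2 := by
  obtain ⟨j, hj | ⟨v, _, hv | hv⟩⟩ := hs
  · simp [hj]
  · simp [hv]
  · subst hv
    exact (Finset.card_insert_le _ _).trans (by simp)

end Aux

/-- for a simplicial complex `K` with vertex set `V` partitioned into
finitely many classes `P 0, …, P (k-1)`, new vertices `z 0, …, z (k-1)` not in `V`,
and `K̃ = K ∪ S` the union of `K` with the gluing stars, the map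
`θ_1 : H_1(K) → H_1(K̃)` induced by the inclusion `K ⊆ K̃` is injective. -/
theorem stmt7 {α : Type} [DecidableEq α] (k : ℕ)
    (K Kt : AbsSC α)
    (P : Fin k → Set α)
    (hPne : ∀ j, (P j).Nonempty)
    (hPdisj : Pairwise (Function.onFun Disjoint P))
    (hPunion : (⋃ j, P j) = K.vertexSet)
    (z : Fin k → α)
    (hzinj : Function.Injective z)
    (hznew : ∀ j, z j ∉ K.vertexSet)
    (hKt : Kt.faces = K.faces ∪ starFaces P z)
    (θ : K.Homology 1 →ₗ[ZMod 2] Kt.Homology 1)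
    (hθ : AbsSC.InducedHom K Kt 1 θ) :
    Function.Injective θ := by
  obtain ⟨h, hspec⟩ := hθ
  rw [injective_iff_map_eq_zero]
  intro x hx
  obtain ⟨⟨c, hc⟩, rfl⟩ := Submodule.Quotient.mk_surjective _ x
  obtain ⟨hc', heq⟩ := hspec c hc
  have hx' : Kt.hClass 1 (AbsSC.chainMap K Kt h 1 c) hc' = 0 := by
    rw [← heq]; exact hx
  rw [AbsSC.hClass] at hx'
  replace hx' := (Submodule.Quotient.mk_eq_zero _).mp hx'
  obtain ⟨w, hw⟩ := hx'
  simp only [Submodule.subtype_apply] at hw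
  -- map w back to a 2-chain on K
  have hback : ∀ s : Kt.simplices 2, s.1 ∈ K.faces ∧ s.1.card = 2 + 1 := by
    intro s
    refine ⟨?_, s.2.2⟩
    have h2 : (s.1 : Finset α) ∈ K.faces ∪ starFaces P z := by
      rw [← hKt]; exact s.2.1
    rcases h2 with hK | hS
    · exact hK
    · exfalso
      have h3 : (s.1 : Finset α).card = 2 + 1 := s.2.2
      have := starFaces_card_le P z hS
      omega
  set g : Kt.simplices 2 → K.simplices 2 := fun s => ⟨s.1, hback s⟩ with hg
  set w' : K.Chain 2 := Finsupp.mapDomain g w with hw'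
  have hmapw : AbsSC.chainMap K Kt h 2 w' = w := by
    rw [hw', AbsSC.chainMap]
    erw [Finsupp.lmapDomain_apply, ← Finsupp.mapDomain_comp]
    have : ((fun s : K.simplices 2 => (⟨s.1, h s.2.1, s.2.2⟩ : Kt.simplices 2)) ∘ g) = id := by
      funext s; exact Subtype.ext rfl
    erw [this, Finsupp.mapDomain_id]
  have hcb : AbsSC.chainMap K Kt h 1 (K.boundary 1 w') = AbsSC.chainMap K Kt h 1 c := by
    rw [chainMap_boundary, hmapw, hw]
  have hcb' : K.boundary 1 w' = c := chainMap_injective K Kt h 1 hcb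
  have : (⟨c, hc⟩ : K.cycles 1) ∈ K.boundariesIn 1 := ⟨w', hcb'⟩
  exact (Submodule.Quotient.mk_eq_zero _).mpr this
end

section
/- For every q > 1, the map θ_q : H_q(K) → H_q(K̃) induced by the inclusion K ⊆ K̃ is an isomorphism. -/
namespace AbsSC

variable {α : Type}

/-- The map on simplices induced by an inclusion. -/
def sMap (K L : AbsSC α) (h : K.faces ⊆ L.faces) (q : ℕ) (s : K.simplices q) :
    L.simplices q := ⟨s.1, h s.2.1, s.2.2⟩

lemma sMap_injective (K L : AbsSC α) (h : K.faces ⊆ L.faces) (q : ℕ) :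
    Function.Injective (sMap K L h q) := by
  intro a b hab
  have h1 : (sMap K L h q a).1 = (sMap K L h q b).1 := by rw [hab]
  exact Subtype.ext h1

lemma chainMap_apply (K L : AbsSC α) (h : K.faces ⊆ L.faces) (q : ℕ) (c : K.Chain q) :
    chainMap K L h q c = Finsupp.mapDomain (sMap K L h q) c := rfl

lemma chainMap_injective (K L : AbsSC α) (h : K.faces ⊆ L.faces) (q : ℕ) :
    Function.Injective (chainMap K L h q) := by
  intro a b hab
  exact Finsupp.mapDomain_injective (sMap_injective K L h q) hab

lemma chainMap_surjective (K L : AbsSC α) (h : K.faces ⊆ L.faces) (q : ℕ)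
    (hs : Function.Surjective (sMap K L h q)) :
    Function.Surjective (chainMap K L h q) := by
  intro f
  let e : K.simplices q ≃ L.simplices q :=
    Equiv.ofBijective _ ⟨sMap_injective K L h q, hs⟩
  refine ⟨Finsupp.mapDomain e.symm f, ?_⟩
  rw [chainMap_apply, ← Finsupp.mapDomain_comp]
  have : (sMap K L h q) ∘ e.symm = id := by
    funext x
    exact e.apply_symm_apply x
  rw [this, Finsupp.mapDomain_id]

lemma chainMap_faceChain (K L : AbsSC α) (h : K.faces ⊆ L.faces) (q : ℕ)
    (s : K.simplices (q + 1)) :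
    chainMap K L h q (K.faceChain q s) = L.faceChain q (sMap K L h (q + 1) s) := by
  unfold faceChain
  rw [map_sum]
  refine Finset.sum_congr rfl fun t _ => ?_
  rw [chainMap_apply]
  exact Finsupp.mapDomain_single

lemma boundary_single (K : AbsSC α) (q : ℕ) (s : K.simplices (q + 1)) (a : ZMod 2) :
    K.boundary q (Finsupp.single s a) = a • K.faceChain q s := by
  simp [boundary]

lemma boundary_comm (K L : AbsSC α) (h : K.faces ⊆ L.faces) (q : ℕ) :
    (L.boundary q).comp (chainMap K L h (q + 1)) =
      (chainMap K L h q).comp (K.boundary q) := by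
  apply Finsupp.lhom_ext
  intro s a
  simp only [LinearMap.comp_apply, chainMap_apply, Finsupp.mapDomain_single,
    boundary_single]
  rw [← chainMap_apply, map_smul, chainMap_faceChain]

end AbsSC

/-- for a simplicial complex `K` with vertex set `V` partitioned into
finitely many classes `P 0, …, P (k-1)`, new vertices `z 0, …, z (k-1)` not in `V`,
and `K̃ = K ∪ S` the union of `K` with the gluing stars, for every `q > 1` the map
`θ_q : H_q(K) → H_q(K̃)` induced by the inclusion `K ⊆ K̃` is an isomorphism. -/
theorem stmt8 {α : Type} [DecidableEq α] (k : ℕ)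
    (K Kt : AbsSC α)
    (P : Fin k → Set α)
    (hPne : ∀ j, (P j).Nonempty)
    (hPdisj : Pairwise (Function.onFun Disjoint P))
    (hPunion : (⋃ j, P j) = K.vertexSet)
    (z : Fin k → α)
    (hzinj : Function.Injective z)
    (hznew : ∀ j, z j ∉ K.vertexSet)
    (hKt : Kt.faces = K.faces ∪ starFaces P z)
    (θ : ∀ q : ℕ, K.Homology q →ₗ[ZMod 2] Kt.Homology q)
    (hθ : ∀ q : ℕ, AbsSC.InducedHom K Kt q (θ q)) :
    ∀ q : ℕ, 1 < q → Function.Bijective (θ q) := by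
  intro q hq
  obtain ⟨m, rfl⟩ : ∃ m, q = m + 1 := ⟨q - 1, by omega⟩
  have hm : 1 ≤ m := by omega
  obtain ⟨h, hspec⟩ := hθ (m + 1)
  -- surjectivity of the simplex map in degrees ≥ 2
  have hsurj : ∀ d : ℕ, 2 ≤ d → Function.Surjective (AbsSC.sMap K Kt h d) := by
    intro d hd s
    obtain ⟨sf, hsf, hcard⟩ := s
    have hKf : sf ∈ K.faces := by
      rw [hKt] at hsf
      rcases hsf with hsf | hsf
      · exact hsf
      · exfalso
        obtain ⟨j, hj | ⟨v, hv, hj | hj⟩⟩ := hsf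
        · subst hj; simp at hcard; omega
        · subst hj; simp at hcard; omega
        · subst hj
          have h2 : ({z j, v} : Finset α).card ≤ 2 := by
            refine le_trans (Finset.card_insert_le _ _) ?_
            simp
          omega
    exact ⟨⟨sf, hKf, hcard⟩, Subtype.ext rfl⟩
  -- cycles correspond
  have hcyc : ∀ c : K.Chain (m + 1),
      c ∈ K.cycles (m + 1) ↔ AbsSC.chainMap K Kt h (m + 1) c ∈ Kt.cycles (m + 1) := by
    intro c
    have hcomm := LinearMap.congr_fun (AbsSC.boundary_comm K Kt h m) c
    simp only [LinearMap.comp_apply] at hcomm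
    constructor
    · intro hc
      have hc0 : K.boundary m c = 0 := hc
      show Kt.boundary m (AbsSC.chainMap K Kt h (m + 1) c) = 0
      rw [hcomm, hc0, map_zero]
    · intro hc
      have hc0 : Kt.boundary m (AbsSC.chainMap K Kt h (m + 1) c) = 0 := hc
      show K.boundary m c = 0
      apply AbsSC.chainMap_injective K Kt h m
      rw [← hcomm, hc0, map_zero]
  constructor
  · rw [injective_iff_map_eq_zero]
    intro x hx
    obtain ⟨⟨c, hc⟩, rfl⟩ := Submodule.Quotient.mk_surjective _ x
    obtain ⟨hc', heq⟩ := hspec c hc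
    have hx' : Kt.hClass (m + 1) (AbsSC.chainMap K Kt h (m + 1) c) hc' = 0 := by
      rw [← heq]; exact hx
    have hmem : AbsSC.chainMap K Kt h (m + 1) c ∈ LinearMap.range (Kt.boundary (m + 1)) := by
      have := (Submodule.Quotient.mk_eq_zero _).mp hx'
      simpa [AbsSC.boundariesIn, Submodule.mem_comap] using this
    obtain ⟨d, hd⟩ := hmem
    obtain ⟨e, rfl⟩ := AbsSC.chainMap_surjective K Kt h (m + 2) (hsurj (m + 2) (by omega)) d
    have hcomm := LinearMap.congr_fun (AbsSC.boundary_comm K Kt h (m + 1)) e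
    simp only [LinearMap.comp_apply] at hcomm
    have hce : AbsSC.chainMap K Kt h (m + 1) (K.boundary (m + 1) e) =
        AbsSC.chainMap K Kt h (m + 1) c := by rw [← hcomm, hd]
    have hce' : K.boundary (m + 1) e = c := AbsSC.chainMap_injective K Kt h (m + 1) hce
    apply (Submodule.Quotient.mk_eq_zero _).mpr
    simp only [AbsSC.boundariesIn, Submodule.mem_comap]
    exact ⟨e, hce'⟩
  · intro y
    obtain ⟨⟨c', hc'⟩, rfl⟩ := Submodule.Quotient.mk_surjective _ y
    obtain ⟨c, rfl⟩ := AbsSC.chainMap_surjective K Kt h (m + 1) (hsurj _ (by omega)) c'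
    have hc : c ∈ K.cycles (m + 1) := (hcyc c).mpr hc'
    obtain ⟨hc'', heq⟩ := hspec c hc
    exact ⟨K.hClass (m + 1) c hc, by rw [heq]; rfl⟩
end

section
/- If t ∈ H_0(K̃_b) is born at b in the sequence H_0(K̃_•) (i.e., t ∉ im(ψ_{b−1})), then there exists s ∈ H_0(K_b) with θ_{0,b}(s) = t such that s is born at b in the sequence H_0(K_•) (i.e., s ∉ im(φ_{b−1})). -/
section Helpers

lemma comps_succ' {W : ℕ → Type} [∀ i, AddCommGroup (W i)] [∀ i, Module (ZMod 2) (W i)]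
    (φ : ∀ i, W i →ₗ[ZMod 2] W (i + 1)) {i : ℕ} (h : i ≤ i + 1) :
    comps φ h = φ i := by
  unfold comps
  rw [Nat.leRecOn_succ (Nat.le_refl i), Nat.leRecOn_self]
  exact LinearMap.comp_id _

lemma faces_mono' {α : Type} {n : ℕ} (K : ℕ → AbsSC α)
    (hKmono : ∀ i, i < n → (K i).faces ⊆ (K (i + 1)).faces)
    {i : ℕ} : ∀ {j : ℕ}, i ≤ j → j ≤ n → (K i).faces ⊆ (K j).faces := by
  intro j
  induction j with
  | zero =>
    intro h _
    have : i = 0 := Nat.le_zero.mp h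
    subst this; exact subset_rfl
  | succ j ih =>
    intro hij hjn
    rcases Nat.eq_or_lt_of_le hij with h | h
    · subst h; exact subset_rfl
    · exact (ih (Nat.lt_succ_iff.mp h) (by omega)).trans (hKmono j (by omega))

lemma boundary_single' {α : Type} (K : AbsSC α) (q : ℕ) (e : K.simplices (q + 1)) :
    K.boundary q (Finsupp.single e 1) = K.faceChain q e := by
  unfold AbsSC.boundary
  rw [Finsupp.lsum_single]
  simp

lemma faceChain_edge' {α : Type} [DecidableEq α] (K : AbsSC α) {a b : α} (hab : a ≠ b)
    (e : K.simplices 1) (he : e.1 = {a, b})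
    (ha : ({a} : Finset α) ∈ K.faces) (hb : ({b} : Finset α) ∈ K.faces) :
    K.faceChain 0 e =
      Finsupp.single (⟨{a}, ha, Finset.card_singleton a⟩ : K.simplices 0) 1 +
      Finsupp.single (⟨{b}, hb, Finset.card_singleton b⟩ : K.simplices 0) 1 := by
  classical
  have key : K.faceChain 0 e = ∑ u ∈ e.1.powersetCard 1,
      (if h : u ∈ K.faces ∧ u.card = 0 + 1 then
        Finsupp.single (⟨u, h⟩ : K.simplices 0) 1 else 0) := by
    rw [AbsSC.faceChain, ← Finset.sum_attach (e.1.powersetCard 1)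
      (fun u => if h : u ∈ K.faces ∧ u.card = 0 + 1 then
        Finsupp.single (⟨u, h⟩ : K.simplices 0) 1 else 0)]
    refine Finset.sum_congr rfl fun t _ => ?_
    obtain ⟨hsub, hcard⟩ := Finset.mem_powersetCard.mp t.2
    rw [dif_pos ⟨K.down_closed e.2.1 hsub (by rw [← Finset.card_pos, hcard]; omega), hcard⟩]
    rfl
  rw [key, he]
  have hps : ({a, b} : Finset α).powersetCard 1 = {{a}, {b}} := by
    rw [Finset.powersetCard_one]
    simp [Finset.map_insert, Finset.map_singleton]
  rw [hps, Finset.sum_pair (fun h => hab (Finset.singleton_injective h))]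
  rw [dif_pos ⟨ha, Finset.card_singleton a⟩, dif_pos ⟨hb, Finset.card_singleton b⟩]
  rfl

lemma chainMap_single' {α : Type} (K L : AbsSC α) (h : K.faces ⊆ L.faces) (q : ℕ)
    (s : K.simplices q) (r : ZMod 2) :
    AbsSC.chainMap K L h q (Finsupp.single s r) =
      Finsupp.single (⟨s.1, h s.2.1, s.2.2⟩ : L.simplices q) r := by
  unfold AbsSC.chainMap
  exact Finsupp.mapDomain_single

end Helpers

/-- in the commutative ladder of 0-th homologies of the filtrations
`K_•` and `K̃_• = K_• ∪ S`, if `t ∈ H_0(K̃_b)` is born at `b` (i.e. `t ∉ im ψ_{b-1}`),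
then there exists `s ∈ H_0(K_b)` with `θ_{0,b}(s) = t` which is born at `b`
(i.e. `s ∉ im φ_{b-1}`). -/
theorem stmt9 {α : Type} [DecidableEq α] (n k : ℕ)
    (K Kt : ℕ → AbsSC α)
    (hK0 : (K 0).faces = ∅)
    (hKt0 : (Kt 0).faces = ∅)
    (hKmono : ∀ i, i < n → (K i).faces ⊆ (K (i + 1)).faces)
    (hKtmono : ∀ i, i < n → (Kt i).faces ⊆ (Kt (i + 1)).faces)
    (P : Fin k → Set α)
    (hPne : ∀ j, (P j).Nonempty)
    (hPdisj : Pairwise (Function.onFun Disjoint P))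
    (hPunion : (⋃ j, P j) = (K 1).vertexSet)
    (z : Fin k → α)
    (hzinj : Function.Injective z)
    (hznew : ∀ (j : Fin k) (i : ℕ), i ≤ n → z j ∉ (K i).vertexSet)
    (hKt : ∀ i, 1 ≤ i → i ≤ n → (Kt i).faces = (K i).faces ∪ starFaces P z)
    (φ : ∀ i : ℕ, (K i).Homology 0 →ₗ[ZMod 2] (K (i + 1)).Homology 0)
    (ψ : ∀ i : ℕ, (Kt i).Homology 0 →ₗ[ZMod 2] (Kt (i + 1)).Homology 0)
    (θ : ∀ i : ℕ, (K i).Homology 0 →ₗ[ZMod 2] (Kt i).Homology 0)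
    (hφ : ∀ i, i < n → AbsSC.InducedHom (K i) (K (i + 1)) 0 (φ i))
    (hψ : ∀ i, i < n → AbsSC.InducedHom (Kt i) (Kt (i + 1)) 0 (ψ i))
    (hθ : ∀ i, i ≤ n → AbsSC.InducedHom (K i) (Kt i) 0 (θ i))
    (hsq : ∀ i, i < n → (θ (i + 1)).comp (φ i) = (ψ i).comp (θ i))
    (b : ℕ) (hb1 : 1 ≤ b) (hbn : b ≤ n)
    (t : (Kt b).Homology 0)
    (ht : t ∉ LinearMap.range (comps ψ (Nat.sub_le b 1))) :
    ∃ s : (K b).Homology 0,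
      θ b s = t ∧ s ∉ LinearMap.range (comps φ (Nat.sub_le b 1)) := by
  classical
  obtain ⟨m, rfl⟩ : ∃ m, b = m + 1 := ⟨b - 1, by omega⟩
  have hmn : m < n := by omega
  have h1n : 1 ≤ n := by omega
  obtain ⟨hsub, hcomm⟩ := hθ (m + 1) hbn
  -- membership in cycles in degree 0 is trivial
  have memK : ∀ c : (K (m + 1)).Chain 0, c ∈ (K (m + 1)).cycles 0 := fun _ =>
    Submodule.mem_top
  have memKt : ∀ c : (Kt (m + 1)).Chain 0, c ∈ (Kt (m + 1)).cycles 0 := fun _ =>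
    Submodule.mem_top
  -- negation is identity in a ZMod 2 module
  have hneg : ∀ x : (Kt (m + 1)).Chain 0, -x = x := fun x => by
    rw [← neg_one_smul (ZMod 2) x]
    have : (-1 : ZMod 2) = 1 := by decide
    rw [this, one_smul]
  -- classes of single vertices coming from K (m+1) are in the range of θ
  have hvert : ∀ (a : (Kt (m + 1)).simplices 0), a.1 ∈ (K (m + 1)).faces →
      ∀ hc : Finsupp.single a 1 ∈ (Kt (m + 1)).cycles 0,
      (Submodule.Quotient.mk ⟨Finsupp.single a 1, hc⟩ : (Kt (m + 1)).Homology 0) ∈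
        LinearMap.range (θ (m + 1)) := by
    intro a ha hc
    obtain ⟨hc', heq⟩ :=
      hcomm (Finsupp.single (⟨a.1, ha, a.2.2⟩ : (K (m + 1)).simplices 0) 1) (memK _)
    refine ⟨(K (m + 1)).hClass 0 (Finsupp.single (⟨a.1, ha, a.2.2⟩ : (K (m + 1)).simplices 0) 1) (memK _), ?_⟩
    rw [heq]
    unfold AbsSC.hClass
    congr 1
    apply Subtype.ext
    show AbsSC.chainMap _ _ hsub 0 _ = _
    erw [chainMap_single']
    exact congrArg (fun x => Finsupp.single x 1) (Subtype.ext rfl)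
  -- surjectivity of θ (m+1)
  have hsurj : ∀ u : (Kt (m + 1)).Homology 0, u ∈ LinearMap.range (θ (m + 1)) := by
    intro u
    obtain ⟨⟨c, hc⟩, rfl⟩ := Submodule.Quotient.mk_surjective _ u
    revert hc
    induction c using Finsupp.induction with
    | zero =>
      intro hc
      have h0 : (⟨0, hc⟩ : (Kt (m + 1)).cycles 0) = 0 := rfl
      rw [h0, Submodule.Quotient.mk_zero]
      exact zero_mem _
    | single_add a r f _ _ ih =>
      intro hc
      have hadd : (⟨Finsupp.single a r + f, hc⟩ : (Kt (m + 1)).cycles 0) =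
          ⟨Finsupp.single a r, memKt _⟩ + ⟨f, memKt _⟩ := rfl
      rw [hadd, Submodule.Quotient.mk_add]
      refine add_mem ?_ (ih (memKt f))
      -- reduce to r = 1
      have hsm : (⟨Finsupp.single a r, memKt _⟩ : (Kt (m + 1)).cycles 0) =
          r • ⟨Finsupp.single a 1, memKt _⟩ := by
        apply Subtype.ext
        show Finsupp.single a r = r • Finsupp.single a 1
        rw [Finsupp.smul_single', mul_one]
      rw [hsm, Submodule.Quotient.mk_smul]
      refine Submodule.smul_mem _ r ?_
      -- single vertex class
      have hcard := a.2.2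
      obtain ⟨v, hv⟩ := Finset.card_eq_one.mp hcard
      have hs' := (Set.ext_iff.mp (hKt (m + 1) (by omega) hbn) a.1).mp a.2.1
      rcases hs' with hs' | hs'
      · exact hvert a hs' _
      · obtain ⟨j, hj⟩ := hs'
        -- a vertex w of P j, available in K (m+1)
        have hwgen : ∀ w, w ∈ P j → ({w} : Finset α) ∈ (K (m + 1)).faces := by
          intro w hw
          have hw1 : w ∈ (K 1).vertexSet := by
            rw [← hPunion]; exact Set.mem_iUnion.mpr ⟨j, hw⟩
          exact faces_mono' K hKmono (by omega) hbn hw1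
        have hzne : ∀ w, w ∈ P j → z j ≠ w := by
          intro w hw hzw
          have hw1 : w ∈ (K 1).vertexSet := by
            rw [← hPunion]; exact Set.mem_iUnion.mpr ⟨j, hw⟩
          exact hznew j 1 h1n (hzw ▸ hw1)
        rcases hj with hj | ⟨w, hw, hj | hj⟩
        · -- a.1 = {z j} : connect to a vertex w of P j via the star edge
          obtain ⟨w, hw⟩ := hPne j
          have hzw : z j ≠ w := hzne w hw
          have hwK : ({w} : Finset α) ∈ (K (m + 1)).faces := hwgen w hw
          have hwKt : ({w} : Finset α) ∈ (Kt (m + 1)).faces := hsub hwK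
          have hedge : ({z j, w} : Finset α) ∈ (Kt (m + 1)).faces := by
            rw [hKt (m + 1) (by omega) hbn]
            exact Or.inr ⟨j, Or.inr ⟨w, hw, Or.inr rfl⟩⟩
          have hzKt : ({z j} : Finset α) ∈ (Kt (m + 1)).faces := by
            rw [hKt (m + 1) (by omega) hbn]
            exact Or.inr ⟨j, Or.inl rfl⟩
          have hecard : ({z j, w} : Finset α).card = 1 + 1 := by
            rw [Finset.card_insert_of_notMem (by simp [hzw]), Finset.card_singleton]
          set e : (Kt (m + 1)).simplices 1 := ⟨{z j, w}, hedge, hecard⟩ with he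
          have hface := faceChain_edge' (Kt (m + 1)) hzw e rfl hzKt hwKt
          have hbd : (Kt (m + 1)).boundary 0 (Finsupp.single e 1) =
              Finsupp.single (⟨{z j}, hzKt, Finset.card_singleton _⟩ :
                (Kt (m + 1)).simplices 0) 1 +
              Finsupp.single (⟨{w}, hwKt, Finset.card_singleton w⟩ :
                (Kt (m + 1)).simplices 0) 1 := by
            rw [boundary_single', hface]
          have haz : a = (⟨{z j}, hzKt, Finset.card_singleton _⟩ :
              (Kt (m + 1)).simplices 0) := Subtype.ext hj
          have hclseq : (Submodule.Quotient.mk ⟨Finsupp.single a 1, memKt _⟩ :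
              (Kt (m + 1)).Homology 0) =
              Submodule.Quotient.mk ⟨Finsupp.single
                (⟨{w}, hwKt, Finset.card_singleton w⟩ : (Kt (m + 1)).simplices 0) 1,
                memKt _⟩ := by
            rw [Submodule.Quotient.eq]
            refine Submodule.mem_comap.mpr ⟨Finsupp.single e 1, ?_⟩
            have goal_eq : (Finsupp.single
                  (⟨{z j}, hzKt, Finset.card_singleton (z j)⟩ : (Kt (m + 1)).simplices 0) 1
                  : (Kt (m + 1)).Chain 0)
                + (Finsupp.single
                  (⟨{w}, hwKt, Finset.card_singleton w⟩ : (Kt (m + 1)).simplices 0) 1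
                  : (Kt (m + 1)).Chain 0)
                = (Finsupp.single a 1 : (Kt (m + 1)).Chain 0) - (Finsupp.single
                  (⟨{w}, hwKt, Finset.card_singleton w⟩ : (Kt (m + 1)).simplices 0) 1
                  : (Kt (m + 1)).Chain 0) := by
              rw [sub_eq_add_neg, hneg, haz]
            exact hbd.trans goal_eq
          rw [hclseq]
          exact hvert _ hwK _
        · -- a.1 = {w} with w ∈ P j
          exact hvert a (hj ▸ hwgen w hw) _
        · -- a.1 = {z j, w} : impossible by cardinality
          exfalso
          have : ({z j, w} : Finset α).card = 2 := by
            rw [Finset.card_insert_of_notMem (by simp [hzne w hw]), Finset.card_singleton]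
          rw [hj, this] at hcard
          omega
  obtain ⟨s, hst⟩ := hsurj t
  refine ⟨s, hst, fun hrange => ht ?_⟩
  obtain ⟨s', hs'⟩ := hrange
  rw [comps_succ'] at hs'
  refine ⟨θ m s', ?_⟩
  rw [comps_succ']
  have hs2 : φ m s' = s := hs'
  have hcomm2 := LinearMap.ext_iff.mp (hsq m hmn) s'
  simp only [LinearMap.comp_apply] at hcomm2
  show ψ m ((θ m) s') = t
  rw [← hcomm2, hs2, hst]
end
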